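/- For α ∈ (0,π) and the fractional-linear transform m_α(z) = (−sin α + cos α · m(z))/(cos α + sin α · m(z)): if m₁, m₂ satisfy m_j(z) = i√z + O(1) along a ray arg z = π − ε and |m_{1,α}(z) − m_{2,α}(z)| = O(e^{−2 Im(√z) a}) along that ray, then |m₁(z) − m₂(z)| = O(|z| e^{−2 Im(√z) a}) along the same ray. -/

import Mathlib

open Complex Real


lemma key_identity (cα sα x y : ℂ) (h : cα ^ 2 + sα ^ 2 = 1)
    (hx : cα + sα * x ≠ 0) (hy : cα + sα * y ≠ 0) :
    (-sα + cα * x) / (cα + sα * x) - (-sα + cα * y) / (cα + sα * y)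
      = (x - y) / ((cα + sα * x) * (cα + sα * y)) := by
  field_simp
  ring_nf
  linear_combination (x - y) * h

/-- If `m₁, m₂` satisfy `m_j(z) = i√z + O(1)` along the ray `arg z = π − ε`, and
the transformed functions `m_{j,α} = (−sin α + cos α · m_j)/(cos α + sin α · m_j)`
satisfy `|m_{1,α}(z) − m_{2,α}(z)| = O(e^{−2 Im(√z) a})` along that ray, then
`|m₁(z) − m₂(z)| = O(|z| e^{−2 Im(√z) a})` along the same ray. -/
theorem boundary_condition_m_function_comparison
    (a : ℝ) (ha : 0 < a) (ε : ℝ) (hε : 0 < ε) (hε' : ε < π / 2)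
    (α : ℝ) (hα : 0 < α) (hα' : α < π)
    (m₁ m₂ : ℂ → ℂ) (s : ℝ → ℂ)
    (hs : ∀ r > (0:ℝ), (s r) ^ 2 = (r : ℂ) * Complex.exp (I * (π - ε)) ∧ 0 < (s r).im)
    (hasym₁ : ∃ C₁ r₁ : ℝ, ∀ r ≥ r₁, r > 0 →
      ‖m₁ ((r : ℂ) * Complex.exp (I * (π - ε))) - I * s r‖ ≤ C₁)
    (hasym₂ : ∃ C₁ r₁ : ℝ, ∀ r ≥ r₁, r > 0 →
      ‖m₂ ((r : ℂ) * Complex.exp (I * (π - ε))) - I * s r‖ ≤ C₁)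
    (hden : ∃ r₂ : ℝ, ∀ r ≥ r₂, r > 0 →
      (Real.cos α : ℂ) + (Real.sin α : ℂ) * m₁ ((r : ℂ) * Complex.exp (I * (π - ε))) ≠ 0 ∧
      (Real.cos α : ℂ) + (Real.sin α : ℂ) * m₂ ((r : ℂ) * Complex.exp (I * (π - ε))) ≠ 0)
    (hO : ∃ C > (0:ℝ), ∃ r₃ : ℝ, ∀ r ≥ r₃, r > 0 →
      ‖(-(Real.sin α : ℂ) + (Real.cos α : ℂ) * m₁ ((r : ℂ) * Complex.exp (I * (π - ε))))
          / ((Real.cos α : ℂ) + (Real.sin α : ℂ) * m₁ ((r : ℂ) * Complex.exp (I * (π - ε))))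
        - (-(Real.sin α : ℂ) + (Real.cos α : ℂ) * m₂ ((r : ℂ) * Complex.exp (I * (π - ε))))
          / ((Real.cos α : ℂ) + (Real.sin α : ℂ) * m₂ ((r : ℂ) * Complex.exp (I * (π - ε))))‖
        ≤ C * Real.exp (-2 * (s r).im * a)) :
    ∃ C > (0:ℝ), ∃ r₀ : ℝ, ∀ r ≥ r₀, r > 0 →
      ‖m₁ ((r : ℂ) * Complex.exp (I * (π - ε)))
        - m₂ ((r : ℂ) * Complex.exp (I * (π - ε)))‖
        ≤ C * r * Real.exp (-2 * (s r).im * a) := by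

  obtain ⟨C₁, r₁, h1⟩ := hasym₁
  obtain ⟨C₂, r₂', h2⟩ := hasym₂
  obtain ⟨r₂, hd⟩ := hden
  obtain ⟨C, hC, r₃, hOb⟩ := hO
  refine ⟨C * ((2 + |C₁|) * (2 + |C₂|)), by positivity, max 1 (max (max r₁ r₂') (max r₂ r₃)), ?_⟩
  intro r hr hr0
  have hr1 : (1:ℝ) ≤ r := le_trans (le_max_left _ _) hr
  have hrr₁ : r ≥ r₁ := le_trans (le_trans (le_max_left _ _) (le_max_left _ _)) (le_trans (le_max_right _ _) hr)
  have hrr₂ : r ≥ r₂' := le_trans (le_trans (le_max_right _ _) (le_max_left _ _)) (le_trans (le_max_right _ _) hr)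
  have hrr₃ : r ≥ r₂ := le_trans (le_trans (le_max_left _ _) (le_max_right _ _)) (le_trans (le_max_right _ _) hr)
  have hrr₄ : r ≥ r₃ := le_trans (le_trans (le_max_right _ _) (le_max_right _ _)) (le_trans (le_max_right _ _) hr)
  set z : ℂ := (r : ℂ) * Complex.exp (I * (π - ε)) with hz
  obtain ⟨hd1, hd2⟩ := hd r hrr₃ hr0
  have hsq : Real.cos α ^ 2 + Real.sin α ^ 2 = 1 := by
    rw [add_comm]; exact Real.sin_sq_add_cos_sq α
  have hsqC : (Real.cos α : ℂ) ^ 2 + (Real.sin α : ℂ) ^ 2 = 1 := by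
    exact_mod_cast congrArg (Complex.ofReal) hsq
  have hid := key_identity (Real.cos α : ℂ) (Real.sin α : ℂ) (m₁ z) (m₂ z) hsqC hd1 hd2
  -- norm of s r
  have hsr := hs r hr0
  have hnorm_sr : ‖s r‖ = Real.sqrt r := by
    have h1' : ‖s r‖ ^ 2 = r := by
      have : ‖(s r) ^ 2‖ = r := by
        rw [hsr.1]
        simp [map_mul, Complex.norm_exp, Complex.norm_real,
          abs_of_pos hr0]
      rwa [norm_pow] at this
    nlinarith [Real.sq_sqrt hr0.le, Real.sqrt_nonneg r, norm_nonneg (s r),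
      Real.sqrt_nonneg r]
  have hsqrt1 : (1:ℝ) ≤ Real.sqrt r := by
    rw [show (1:ℝ) = Real.sqrt 1 by simp]; exact Real.sqrt_le_sqrt hr1
  -- bounds on m_j
  have hm1 : ‖m₁ z‖ ≤ C₁ + Real.sqrt r := by
    have := h1 r hrr₁ hr0
    calc ‖m₁ z‖ = ‖(m₁ z - I * s r) + I * s r‖ := by ring_nf
      _ ≤ ‖m₁ z - I * s r‖ + ‖I * s r‖ := norm_add_le _ _
      _ ≤ C₁ + Real.sqrt r := by
          have hI : ‖I * s r‖ = Real.sqrt r := by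
            rw [norm_mul, Complex.norm_I, one_mul, hnorm_sr]
          rw [hI]; exact add_le_add this le_rfl
  have hm2 : ‖m₂ z‖ ≤ C₂ + Real.sqrt r := by
    have := h2 r hrr₂ hr0
    calc ‖m₂ z‖ = ‖(m₂ z - I * s r) + I * s r‖ := by ring_nf
      _ ≤ ‖m₂ z - I * s r‖ + ‖I * s r‖ := norm_add_le _ _
      _ ≤ C₂ + Real.sqrt r := by
          have hI : ‖I * s r‖ = Real.sqrt r := by
            rw [norm_mul, Complex.norm_I, one_mul, hnorm_sr]
          rw [hI]; exact add_le_add this le_rfl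
  have hcos : ‖(Real.cos α : ℂ)‖ ≤ 1 := by
    rw [Complex.norm_real, Real.norm_eq_abs]; exact abs_cos_le_one α
  have hsin : ‖(Real.sin α : ℂ)‖ ≤ 1 := by
    rw [Complex.norm_real, Real.norm_eq_abs]; exact abs_sin_le_one α
  have hD1 : ‖(Real.cos α : ℂ) + (Real.sin α : ℂ) * m₁ z‖ ≤ (2 + |C₁|) * Real.sqrt r := by
    calc ‖(Real.cos α : ℂ) + (Real.sin α : ℂ) * m₁ z‖
        ≤ ‖(Real.cos α : ℂ)‖ + ‖(Real.sin α : ℂ)‖ * ‖m₁ z‖ := by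
          simpa [norm_mul] using norm_add_le (Real.cos α : ℂ) ((Real.sin α : ℂ) * m₁ z)
      _ ≤ 1 + 1 * (C₁ + Real.sqrt r) := by
          gcongr
      _ ≤ (2 + |C₁|) * Real.sqrt r := by
          nlinarith [le_abs_self C₁, abs_nonneg C₁, hsqrt1]
  have hD2 : ‖(Real.cos α : ℂ) + (Real.sin α : ℂ) * m₂ z‖ ≤ (2 + |C₂|) * Real.sqrt r := by
    calc ‖(Real.cos α : ℂ) + (Real.sin α : ℂ) * m₂ z‖
        ≤ ‖(Real.cos α : ℂ)‖ + ‖(Real.sin α : ℂ)‖ * ‖m₂ z‖ := by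
          simpa [norm_mul] using norm_add_le (Real.cos α : ℂ) ((Real.sin α : ℂ) * m₂ z)
      _ ≤ 1 + 1 * (C₂ + Real.sqrt r) := by
          gcongr
      _ ≤ (2 + |C₂|) * Real.sqrt r := by
          nlinarith [le_abs_self C₂, abs_nonneg C₂, hsqrt1]
  have hOr := hOb r hrr₄ hr0
  rw [hid] at hOr
  have hDne : ((Real.cos α : ℂ) + (Real.sin α : ℂ) * m₁ z)
      * ((Real.cos α : ℂ) + (Real.sin α : ℂ) * m₂ z) ≠ 0 := mul_ne_zero hd1 hd2
  have hdiffeq : m₁ z - m₂ z =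
      (m₁ z - m₂ z) / (((Real.cos α : ℂ) + (Real.sin α : ℂ) * m₁ z)
        * ((Real.cos α : ℂ) + (Real.sin α : ℂ) * m₂ z))
      * (((Real.cos α : ℂ) + (Real.sin α : ℂ) * m₁ z)
        * ((Real.cos α : ℂ) + (Real.sin α : ℂ) * m₂ z)) := (div_mul_cancel₀ _ hDne).symm
  have hsrsr : Real.sqrt r * Real.sqrt r = r := Real.mul_self_sqrt hr0.le
  calc ‖m₁ z - m₂ z‖
      = ‖(m₁ z - m₂ z) / (((Real.cos α : ℂ) + (Real.sin α : ℂ) * m₁ z)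
          * ((Real.cos α : ℂ) + (Real.sin α : ℂ) * m₂ z))‖
        * (‖(Real.cos α : ℂ) + (Real.sin α : ℂ) * m₁ z‖
          * ‖(Real.cos α : ℂ) + (Real.sin α : ℂ) * m₂ z‖) := by
        conv_lhs => rw [hdiffeq]
        rw [norm_mul, norm_mul]
    _ ≤ (C * Real.exp (-2 * (s r).im * a)) * (((2 + |C₁|) * Real.sqrt r) * ((2 + |C₂|) * Real.sqrt r)) := by
        have h0 : (0:ℝ) ≤ (2 + |C₁|) * Real.sqrt r := by positivity
        have h0' : (0:ℝ) ≤ (2 + |C₂|) * Real.sqrt r := by positivity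
        exact mul_le_mul hOr (mul_le_mul hD1 hD2 (norm_nonneg _) h0)
          (mul_nonneg (norm_nonneg _) (norm_nonneg _)) (by positivity)
    _ = C * ((2 + |C₁|) * (2 + |C₂|)) * r * Real.exp (-2 * (s r).im * a) := by
        have hx : ((2 + |C₁|) * Real.sqrt r) * ((2 + |C₂|) * Real.sqrt r)
            = (2 + |C₁|) * (2 + |C₂|) * r := by linear_combination ((2 + |C₁|) * (2 + |C₂|)) * hsrsr
        rw [hx]; ring
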